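/- Any Fourier mode of an energy–momentum tensor with spacelike wave vector k that is transverse (k^μ T_{μν} = 0) can be realized by a distribution of conical defects: for k_μ = (0,k,0,0) with k > 0, the span of the matrices T̂[φ,v] with entries T̂_{00} = 1, T̂_{02} = T̂_{20} = (v/k)cos φ, T̂_{03} = T̂_{30} = (v/k)sin φ, T̂_{22} = v²/k² − sin²φ, T̂_{23} = T̂_{32} = cos φ sin φ, T̂_{33} = v²/k² − cos²φ, and all entries with index 1 equal to zero, over all φ ∈ [0, π) and v ∈ [0, k], equals the full 6-dimensional space of symmetric 4×4 matrices T with T_{μ1} = T_{1μ} = 0 for all μ. -/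

import Mathlib

open Real

/-- The energy–momentum Fourier mode of a laminar plane wave of defects with
wave vector `k_μ = (0,k,0,0)`, direction angle `φ`, and perpendicular velocity
`v`. -/
noncomputable def Tlp (k φ v : ℝ) : Matrix (Fin 4) (Fin 4) ℝ :=
  !![1, 0, (v/k) * Real.cos φ, (v/k) * Real.sin φ;
     0, 0, 0, 0;
     (v/k) * Real.cos φ, 0, v^2/k^2 - (Real.sin φ)^2, Real.cos φ * Real.sin φ;
     (v/k) * Real.sin φ, 0, Real.cos φ * Real.sin φ, v^2/k^2 - (Real.cos φ)^2]

set_option maxHeartbeats 1000000 in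
/-- For `k > 0`, the real span of the laminar-plane-wave
energy–momentum modes `T̂[φ,v]` with `φ ∈ [0,π)` and `v ∈ [0,k]` is exactly the
6-dimensional space of symmetric 4×4 matrices that are transverse to
`k_μ = (0,k,0,0)`, i.e. whose row and column of index 1 vanish. -/
theorem span_of_laminar_modes_eq_transverse (k : ℝ) (hk : 0 < k) :
    (Submodule.span ℝ
        {M : Matrix (Fin 4) (Fin 4) ℝ |
          ∃ φ ∈ Set.Ico 0 π, ∃ v ∈ Set.Icc 0 k, M = Tlp k φ v} : Set _) =
      {T : Matrix (Fin 4) (Fin 4) ℝ | T.IsSymm ∧ ∀ μ, T μ 1 = 0 ∧ T 1 μ = 0} := by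
  have hk0 : k ≠ 0 := hk.ne'
  set gens : Set (Matrix (Fin 4) (Fin 4) ℝ) :=
    {M : Matrix (Fin 4) (Fin 4) ℝ |
      ∃ φ ∈ Set.Ico 0 π, ∃ v ∈ Set.Icc 0 k, M = Tlp k φ v} with hgens
  -- the target set as a submodule
  let S : Submodule ℝ (Matrix (Fin 4) (Fin 4) ℝ) :=
    { carrier := {T | T.IsSymm ∧ ∀ μ, T μ 1 = 0 ∧ T 1 μ = 0}
      add_mem' := by
        rintro A B ⟨hA, hA1⟩ ⟨hB, hB1⟩
        exact ⟨hA.add hB, fun μ => by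
          simp [Matrix.add_apply, (hA1 μ).1, (hA1 μ).2, (hB1 μ).1, (hB1 μ).2]⟩
      zero_mem' := ⟨Matrix.isSymm_zero, fun μ => ⟨rfl, rfl⟩⟩
      smul_mem' := by
        rintro c A ⟨hA, hA1⟩
        exact ⟨hA.smul c, fun μ => by
          simp [Matrix.smul_apply, (hA1 μ).1, (hA1 μ).2]⟩ }
  have key : Submodule.span ℝ gens = S := by
    apply le_antisymm
    · rw [Submodule.span_le]
      rintro M ⟨φ, hφ, v, hv, rfl⟩
      constructor
      · ext i j
        fin_cases i <;> fin_cases j <;> simp [Tlp, Matrix.transpose_apply, Matrix.vecHead, Matrix.vecTail]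
      · intro μ
        fin_cases μ <;> simp [Tlp, Matrix.vecHead, Matrix.vecTail]
    · rintro T ⟨hsymm, hzero⟩
      have hs := hsymm.apply
      -- generator memberships
      have hπ2 : (π/2 : ℝ) ∈ Set.Ico (0:ℝ) π :=
        ⟨by positivity, by linarith [Real.pi_pos]⟩
      have hπ4 : (π/4 : ℝ) ∈ Set.Ico (0:ℝ) π :=
        ⟨by positivity, by linarith [Real.pi_pos]⟩
      have h0 : (0:ℝ) ∈ Set.Ico (0:ℝ) π := ⟨le_rfl, Real.pi_pos⟩
      have hv0 : (0:ℝ) ∈ Set.Icc (0:ℝ) k := ⟨le_rfl, hk.le⟩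
      have hvk : k ∈ Set.Icc (0:ℝ) k := ⟨hk.le, le_rfl⟩
      have hvk2 : k/2 ∈ Set.Icc (0:ℝ) k := ⟨by positivity, by linarith⟩
      have m1 : Tlp k 0 0 ∈ gens := ⟨0, h0, 0, hv0, rfl⟩
      have m2 : Tlp k (π/2) 0 ∈ gens := ⟨π/2, hπ2, 0, hv0, rfl⟩
      have m3 : Tlp k 0 k ∈ gens := ⟨0, h0, k, hvk, rfl⟩
      have m4 : Tlp k (π/2) k ∈ gens := ⟨π/2, hπ2, k, hvk, rfl⟩
      have m5 : Tlp k (π/4) 0 ∈ gens := ⟨π/4, hπ4, 0, hv0, rfl⟩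
      have m6 : Tlp k 0 (k/2) ∈ gens := ⟨0, h0, k/2, hvk2, rfl⟩
      set a := T 0 0
      set b := T 0 2
      set c := T 0 3
      set d := T 2 2
      set e := T 2 3
      set f := T 3 3
      have e1 : Tlp k 0 0 = !![1,0,0,0; 0,0,0,0; 0,0,0,0; 0,0,0,-1] := by
        ext i j; fin_cases i <;> fin_cases j <;>
          simp [Tlp, Matrix.vecHead, Matrix.vecTail]
      have e2 : Tlp k (π/2) 0 = !![1,0,0,0; 0,0,0,0; 0,0,-1,0; 0,0,0,0] := by
        ext i j; fin_cases i <;> fin_cases j <;>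
          simp [Tlp, Matrix.vecHead, Matrix.vecTail]
      have e3 : Tlp k 0 k = !![1,0,1,0; 0,0,0,0; 1,0,1,0; 0,0,0,0] := by
        ext i j; fin_cases i <;> fin_cases j <;>
          simp [Tlp, Matrix.vecHead, Matrix.vecTail, div_self hk0] <;>
          (try field_simp) <;> first | exact hk0 | norm_num
      have e4 : Tlp k (π/2) k = !![1,0,0,1; 0,0,0,0; 0,0,0,0; 1,0,0,1] := by
        ext i j; fin_cases i <;> fin_cases j <;>
          simp [Tlp, Matrix.vecHead, Matrix.vecTail, div_self hk0] <;>
          (try field_simp) <;> first | exact hk0 | norm_num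
      have e5 : Tlp k (π/4) 0 =
          !![1,0,0,0; 0,0,0,0; 0,0,-1/2,1/2; 0,0,1/2,-1/2] := by
        ext i j; fin_cases i <;> fin_cases j <;>
          simp [Tlp, Matrix.vecHead, Matrix.vecTail, Real.cos_pi_div_four,
            Real.sin_pi_div_four] <;>
          norm_num [div_mul_div_comm, Real.mul_self_sqrt, div_pow, Real.sq_sqrt]
      have e6 : Tlp k 0 (k/2) =
          !![1,0,1/2,0; 0,0,0,0; 1/2,0,1/4,0; 0,0,0,-3/4] := by
        ext i j; fin_cases i <;> fin_cases j <;>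
          simp [Tlp, Matrix.vecHead, Matrix.vecTail] <;>
          (try field_simp) <;> ring
      have hT : T =
          (3/2*a - 3*b - 2*c + 3/2*d - e + 1/2*f) • Tlp k 0 0
          + (1/2*a - c - 1/2*d - e + 1/2*f) • Tlp k (π/2) 0
          + (a - b - 2*c + d + f) • Tlp k 0 k
          + c • Tlp k (π/2) k
          + (2*e) • Tlp k (π/4) 0
          + (-2*a + 4*b + 4*c - 2*d - 2*f) • Tlp k 0 (k/2) := by
        have hb : T 2 0 = b := hs 0 2
        have hc : T 3 0 = c := hs 0 3
        have he : T 3 2 = e := hs 2 3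
        rw [e1, e2, e3, e4, e5, e6]
        ext i j
        fin_cases i <;> fin_cases j <;>
          simp [Matrix.add_apply, Matrix.smul_apply, Matrix.vecHead,
            Matrix.vecTail, hzero, hb, hc, he] <;>
          ring1
      rw [hT]
      have sub := Submodule.subset_span (R := ℝ) (s := gens)
      exact Submodule.add_mem _ (Submodule.add_mem _ (Submodule.add_mem _
        (Submodule.add_mem _ (Submodule.add_mem _
          (Submodule.smul_mem _ _ (sub m1)) (Submodule.smul_mem _ _ (sub m2)))
          (Submodule.smul_mem _ _ (sub m3))) (Submodule.smul_mem _ _ (sub m4)))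
        (Submodule.smul_mem _ _ (sub m5))) (Submodule.smul_mem _ _ (sub m6))
  rw [key]
  rfl
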